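/- arXiv:2201.09727 — 3 statements merged into one kernel-verified Lean document; each statement's English description precedes it below -/
import Mathlib

section
/- Weighted ratio (Hoffman) bound: let X be a simple graph on a finite nonempty vertex set V and let A be a symmetric real matrix indexed by V such that A(u,v) = 0 whenever u and v are not adjacent in X (in particular every diagonal entry of A is 0), and such that every row of A sums to the same real number d. Let τ be the least eigenvalue of A and assume τ < 0 and τ < d. Then every independent set S of X satisfies |S| ≤ |V| / (1 − d/τ); equivalently, |S|·(d − τ) ≤ |V|·(−τ). -/
open Matrix

private lemma quad_form_ge {V : Type*} [Fintype V] [DecidableEq V] (A : Matrix V V ℝ) (τ : ℝ)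
    (hsymm : A.IsSymm)
    (hτ_least : ∀ μ : ℝ, (∃ x : V → ℝ, x ≠ 0 ∧ A.mulVec x = μ • x) → τ ≤ μ)
    (x : V → ℝ) : τ * (x ⬝ᵥ x) ≤ x ⬝ᵥ A.mulVec x := by
  have hA : A.IsHermitian := by
    rw [Matrix.IsHermitian, Matrix.conjTranspose_eq_transpose_of_trivial]; exact hsymm
  set B : Matrix V V ℝ := A - τ • 1 with hB
  have hBH : B.IsHermitian := hA.sub (by simp [Matrix.IsHermitian])
  have hpsd : B.PosSemidef := by
    refine hBH.posSemidef_iff_eigenvalues_nonneg.mpr fun i => show (0:ℝ) ≤ _ from ?_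
    have hv := hBH.mulVec_eigenvectorBasis i
    have hvne : (⇑(hBH.eigenvectorBasis i) : V → ℝ) ≠ 0 := by
      have := (hBH.eigenvectorBasis).orthonormal.ne_zero i
      intro h; apply this; ext j; exact congrFun h j
    have hAv : A.mulVec (⇑(hBH.eigenvectorBasis i)) =
        (hBH.eigenvalues i + τ) • (⇑(hBH.eigenvectorBasis i)) := by
      have hBv : B.mulVec (⇑(hBH.eigenvectorBasis i)) =
          A.mulVec (⇑(hBH.eigenvectorBasis i)) - τ • (⇑(hBH.eigenvectorBasis i)) := by
        simp [hB, Matrix.sub_mulVec, Matrix.smul_mulVec, Matrix.one_mulVec]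
      rw [hBv] at hv
      rw [sub_eq_iff_eq_add.mp hv]; module
    have := hτ_least (hBH.eigenvalues i + τ) ⟨_, hvne, hAv⟩
    linarith
  have hq := hpsd.dotProduct_mulVec_nonneg x
  have hx : star x = x := by simp
  rw [hx] at hq
  have hexp : x ⬝ᵥ B.mulVec x = x ⬝ᵥ A.mulVec x - τ * (x ⬝ᵥ x) := by
    simp [hB, Matrix.sub_mulVec, Matrix.smul_mulVec, Matrix.one_mulVec,
      dotProduct_sub, dotProduct_smul, smul_eq_mul]
  linarith [hexp ▸ hq]

/-- Weighted ratio (Hoffman) bound: if `A` is a symmetric real weighted adjacency matrix of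
a graph `X` with constant row sum `d` and least eigenvalue `τ < 0`, `τ < d`, then every
independent set `S` of `X` satisfies `|S| * (d - τ) ≤ |V| * (-τ)`. -/
theorem stmt_5 {V : Type*} [Fintype V] [Nonempty V]
    (X : SimpleGraph V) (A : Matrix V V ℝ) (d τ : ℝ)
    (hsymm : A.IsSymm)
    (hzero : ∀ u v : V, ¬ X.Adj u v → A u v = 0)
    (hrow : A.mulVec (fun _ => 1) = fun _ => d)
    (hτ_eig : ∃ x : V → ℝ, x ≠ 0 ∧ A.mulVec x = τ • x)
    (hτ_least : ∀ μ : ℝ, (∃ x : V → ℝ, x ≠ 0 ∧ A.mulVec x = μ • x) → τ ≤ μ)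
    (hτneg : τ < 0) (hτd : τ < d)
    (S : Finset V) (hS : ∀ u ∈ S, ∀ v ∈ S, ¬ X.Adj u v) :
    (S.card : ℝ) * (d - τ) ≤ (Fintype.card V : ℝ) * (-τ) := by
  classical
  set n : ℝ := (Fintype.card V : ℝ) with hn_def
  set s : ℝ := (S.card : ℝ) with hs_def
  have hn : 0 < n := by
    simp only [hn_def]; exact_mod_cast Fintype.card_pos
  have hs0 : 0 ≤ s := by simp only [hs_def]; positivity
  set c : ℝ := s / n with hc_def
  set χ : V → ℝ := fun v => if v ∈ S then 1 else 0 with hχ_def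
  set one : V → ℝ := fun _ => 1 with hone_def
  -- basic dot products
  have hχχ : χ ⬝ᵥ χ = s := by
    simp only [dotProduct, hχ_def, ite_mul, one_mul, zero_mul, if_pos, hs_def]
    rw [Finset.sum_ite_mem, Finset.univ_inter]
    simp
  have hχ1 : χ ⬝ᵥ one = s := by
    simp only [dotProduct, hχ_def, hone_def, mul_one, hs_def]
    rw [Finset.sum_ite_mem, Finset.univ_inter]
    simp
  have h11 : one ⬝ᵥ one = n := by
    simp [dotProduct, hone_def, hn_def]
  have hχd : χ ⬝ᵥ (fun _ => d) = s * d := by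
    simp only [dotProduct, hχ_def, ite_mul, one_mul, zero_mul, hs_def]
    rw [Finset.sum_ite_mem, Finset.univ_inter, Finset.sum_const]
    simp [mul_comm]
  have h1d : one ⬝ᵥ (fun _ => d) = n * d := by
    simp [dotProduct, hone_def, hn_def, mul_comm]
  -- quadratic form on the indicator is zero
  have hAχχ : χ ⬝ᵥ A.mulVec χ = 0 := by
    simp only [dotProduct, Matrix.mulVec, hχ_def]
    refine Finset.sum_eq_zero fun u _ => ?_
    by_cases hu : u ∈ S
    · simp only [hu, if_true, one_mul]
      refine Finset.sum_eq_zero fun v _ => ?_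
      by_cases hv : v ∈ S
      · simp [hv, hzero u v (hS u hu v hv)]
      · simp [hv]
    · simp [hu]
  -- row sums
  have hA1 : A.mulVec one = fun _ => d := hrow
  have h1Aχ : one ⬝ᵥ A.mulVec χ = d * s := by
    rw [Matrix.dotProduct_mulVec, ← Matrix.mulVec_transpose, hsymm.eq, hA1]
    simp only [dotProduct, hχ_def, mul_ite, mul_one, mul_zero]
    rw [Finset.sum_ite_mem, Finset.univ_inter, Finset.sum_const]
    simp [hs_def, mul_comm]
  have hχAχ : χ ⬝ᵥ A.mulVec one = s * d := by rw [hA1, hχd]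
  -- the test vector
  set x : V → ℝ := χ - c • one with hx_def
  have hAx : A.mulVec x = A.mulVec χ - c • (fun _ => d) := by
    rw [hx_def, Matrix.mulVec_sub, Matrix.mulVec_smul, hA1]
  have hxAx : x ⬝ᵥ A.mulVec x = -(c * s * d) + c * c * (n * d) - c * (d * s) := by
    rw [hAx, hx_def]
    simp only [sub_dotProduct, dotProduct_sub, smul_dotProduct,
      dotProduct_smul, smul_eq_mul]
    rw [hAχχ, hχd, h1d, h1Aχ]
    ring
  have hxx : x ⬝ᵥ x = s - 2 * c * s + c * c * n := by
    have h1χ : one ⬝ᵥ χ = s := by rw [dotProduct_comm, hχ1]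
    rw [hx_def]
    simp only [sub_dotProduct, dotProduct_sub, smul_dotProduct,
      dotProduct_smul, smul_eq_mul]
    rw [hχχ, hχ1, h11, h1χ]
    ring
  have key := quad_form_ge A τ hsymm hτ_least x
  rw [hxAx, hxx] at key
  have hcn : c * n = s := by
    rw [hc_def]; field_simp
  -- clear denominators
  have key2 : τ * (n * s - s * s) ≤ -(d * (s * s)) := by
    have h := mul_le_mul_of_nonneg_left key hn.le
    have e1 : τ * (n * s - s * s) = n * (τ * (s - 2 * c * s + c * c * n)) := by
      rw [hc_def]; field_simp; ring
    have e2 : n * (-(c * s * d) + c * c * (n * d) - c * (d * s)) = -(d * (s * s)) := by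
      rw [hc_def]; field_simp; ring
    rw [e1, ← e2]; exact h
  -- now pure algebra
  rcases eq_or_lt_of_le hs0 with hs | hs
  · rw [← hs]
    nlinarith
  · nlinarith [key2, mul_pos hs hs, hs]
end

section
/- Eigenvalues of conjugacy-class weighted Cayley matrices: let G be a finite group and f : G → ℂ a class function, i.e., f(g h g⁻¹) = f(h) for all g, h ∈ G. Let A be the G × G complex matrix with entries A(g,h) = f(h g⁻¹). Then for every irreducible finite-dimensional complex character χ of G, the complex number (1/χ(1)) · Σ_{g ∈ G} f(g) χ(g) is an eigenvalue of A. -/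
open CategoryTheory Module

/-- For a class function `f` on a finite group `G` and the matrix `A(g,h) = f(h g⁻¹)`,
every irreducible complex character `χ` of `G` yields an eigenvalue
`(1/χ(1)) * ∑_{g} f(g) χ(g)` of `A`. -/
theorem stmt_6 {G : Type} [Group G] [Fintype G] [DecidableEq G]
    (f : G → ℂ) (hf : ∀ g h : G, f (g * h * g⁻¹) = f h)
    (A : Matrix G G ℂ) (hA : ∀ g h : G, A g h = f (h * g⁻¹))
    (V : FDRep ℂ G) (hV : CategoryTheory.Simple V) :
    Module.End.HasEigenvalue (Matrix.toLin' A)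
      ((V.character 1)⁻¹ * ∑ g : G, f g * V.character g) := by
  classical
  set χ : G → ℂ := V.character with hχ
  -- the character at 1 is the dimension, which is nonzero
  have hχ1 : χ 1 ≠ 0 := by
    rw [hχ, FDRep.char_one]
    simp only [ne_eq, Nat.cast_eq_zero]
    intro h0
    have hs : Subsingleton V := Module.finrank_zero_iff (R := ℂ) (M := V) |>.mp h0
    apply CategoryTheory.id_nonzero V
    apply Action.Hom.ext
    refine FGModuleCat.hom_ext (LinearMap.ext ?_)
    intro x
    exact @Subsingleton.elim _ hs _ _
  -- the averaged operator T = ∑ f u • ρ u, as a morphism of representations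
  set Thom : V →ₗ[ℂ] V := ∑ u : G, f u • (V.ρ u : V →ₗ[ℂ] V) with hThom
  have hcomm : ∀ g : G, (V.ρ g : V →ₗ[ℂ] V) * Thom = Thom * (V.ρ g) := by
    intro g
    rw [hThom, Finset.mul_sum, Finset.sum_mul]
    refine Fintype.sum_equiv (MulAut.conj g).toEquiv _ _ ?_
    intro u
    rw [mul_smul_comm, smul_mul_assoc, ← map_mul, ← map_mul]
    have he : (MulAut.conj g).toEquiv u = g * u * g⁻¹ := rfl
    rw [he, hf g u]
    congr 1
    group
  set T : V ⟶ V := Action.Hom.mk (FGModuleCat.ofHom Thom) (fun g => by exact FGModuleCat.hom_ext (hcomm g).symm) with hT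
  -- Schur's lemma: T is a scalar
  have hfr : Module.finrank ℂ (V ⟶ V) = 1 := by
    rw [FDRep.finrank_hom_simple_simple V V, if_pos ⟨CategoryTheory.Iso.refl V⟩]
  obtain ⟨c, hc⟩ :=
    ((finrank_eq_one_iff_of_nonzero' (𝟙 V) (CategoryTheory.id_nonzero V)).mp hfr) T
  have hchom : Thom = c • LinearMap.id := by
    have := congrArg Action.Hom.hom hc
    rw [Action.smul_hom] at this
    exact congrArg (fun f => f.hom.hom) this.symm
  -- trace identity: ∑ u, f u * χ (u * g) = c * χ g
  have key : ∀ g : G, ∑ u : G, f u * χ (u * g) = c * χ g := by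
    intro g
    have h1 : Thom * (V.ρ g : V →ₗ[ℂ] V) = c • (V.ρ g : V →ₗ[ℂ] V) := by
      rw [hchom]; ext x; simp
    have h2 := congrArg (LinearMap.trace ℂ V) h1
    rw [map_smul] at h2
    rw [hThom, Finset.sum_mul] at h2
    simp only [smul_mul_assoc, map_sum, map_smul, ← map_mul] at h2
    simpa [hχ, FDRep.character, smul_eq_mul] using h2
  -- identify c with the claimed eigenvalue
  have hc' : (χ 1)⁻¹ * ∑ g : G, f g * χ g = c := by
    have := key 1
    simp only [mul_one] at this
    rw [this]
    field_simp
  rw [hc']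
  -- χ is an eigenvector
  apply Module.End.hasEigenvalue_of_hasEigenvector (x := χ)
  constructor
  · rw [Module.End.mem_eigenspace_iff]
    funext g
    rw [Matrix.toLin'_apply]
    have hmul : A.mulVec χ g = ∑ h : G, f (h * g⁻¹) * χ h := by
      simp [Matrix.mulVec, dotProduct, hA]
    rw [hmul, Pi.smul_apply, smul_eq_mul, ← key g]
    refine Fintype.sum_equiv (Equiv.mulRight g⁻¹) _ _ ?_
    intro u
    simp [mul_assoc]
  · intro h0
    exact hχ1 (by rw [h0]; rfl)
end

section
/- Ratio bound for the index-2 subgroup: let G be a finite group, H a subgroup of G of index 2, and C ⊆ H a subset closed under inverses with 1 ∉ C. Let A be a symmetric real matrix indexed by the elements of G such that A(g,h) = 0 whenever h g⁻¹ ∉ C, and such that every row of A sums to the same real number d. Let τ be the least eigenvalue of A and assume τ < 0 and τ < d. Then every subset F ⊆ H satisfying h g⁻¹ ∉ C for all g, h ∈ F has |F| ≤ (|G|/2) / (1 − d/τ); equivalently, |F|·(d − τ) ≤ (|G|/2)·(−τ). -/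
open Matrix

lemma rayleigh_min {n : Type*} [Fintype n] [DecidableEq n] (A : Matrix n n ℝ)
    (hs : A.IsSymm) (τ : ℝ)
    (hle : ∀ μ : ℝ, (∃ x : n → ℝ, x ≠ 0 ∧ A.mulVec x = μ • x) → τ ≤ μ)
    (x : n → ℝ) : τ * (x ⬝ᵥ x) ≤ x ⬝ᵥ A.mulVec x := by
  have hB : (A - τ • (1 : Matrix n n ℝ)).IsHermitian := by
    have hA : A.IsHermitian := by
      rw [Matrix.IsHermitian, Matrix.conjTranspose_eq_transpose_of_trivial]; exact hs
    have hI : (τ • (1 : Matrix n n ℝ)).IsHermitian := by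
      simp [Matrix.IsHermitian]
    exact hA.sub hI
  have hev : ∀ i, 0 ≤ hB.eigenvalues i := by
    intro i
    have h1 := hB.mulVec_eigenvectorBasis i
    have hnz : (⇑(hB.eigenvectorBasis i) : n → ℝ) ≠ 0 :=
      (WithLp.ofLp_eq_zero 2).ne.2 <| hB.eigenvectorBasis.orthonormal.ne_zero i
    have h2 : A.mulVec ⇑(hB.eigenvectorBasis i)
        = (hB.eigenvalues i + τ) • ⇑(hB.eigenvectorBasis i) := by
      have := h1
      rw [Matrix.sub_mulVec, Matrix.smul_mulVec, Matrix.one_mulVec, sub_eq_iff_eq_add] at this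
      rw [this, add_smul]
    have := hle _ ⟨_, hnz, h2⟩
    linarith
  have hpsd := hB.posSemidef_iff_eigenvalues_nonneg.mpr hev
  have := hpsd.dotProduct_mulVec_nonneg x
  simp only [star_trivial, Matrix.sub_mulVec, Matrix.smul_mulVec, Matrix.one_mulVec,
    dotProduct_sub, dotProduct_smul, smul_eq_mul] at this
  linarith

/-- Ratio bound for the index-2 subgroup: with `A` a symmetric weighted adjacency matrix of
`Cay(G,C)` with constant row sum `d` and least eigenvalue `τ < 0`, `τ < d`, every
`C`-coclique `F` contained in the index-2 subgroup `H` satisfies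
`|F| * (d - τ) ≤ (|G|/2) * (-τ)`. -/
theorem stmt_8 {G : Type*} [Group G] [Fintype G] [DecidableEq G]
    (H : Subgroup G) (hH : H.index = 2)
    (C : Set G) (hCH : C ⊆ (H : Set G)) (hCinv : ∀ c ∈ C, c⁻¹ ∈ C)
    (hC1 : (1 : G) ∉ C)
    (A : Matrix G G ℝ) (d τ : ℝ)
    (hsymm : A.IsSymm)
    (hzero : ∀ g h : G, h * g⁻¹ ∉ C → A g h = 0)
    (hrow : A.mulVec (fun _ => 1) = fun _ => d)
    (hτ_eig : ∃ x : G → ℝ, x ≠ 0 ∧ A.mulVec x = τ • x)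
    (hτ_least : ∀ μ : ℝ, (∃ x : G → ℝ, x ≠ 0 ∧ A.mulVec x = μ • x) → τ ≤ μ)
    (hτneg : τ < 0) (hτd : τ < d)
    (F : Finset G) (hFH : ↑F ⊆ (H : Set G))
    (hF : ∀ g ∈ F, ∀ h ∈ F, h * g⁻¹ ∉ C) :
    (F.card : ℝ) * (d - τ) ≤ ((Fintype.card G : ℝ) / 2) * (-τ) := by
  classical
  set u : G → ℝ := fun g => if g ∈ F then 1 else 0 with hu
  set v : G → ℝ := fun g => if g ∈ H then 1 else 0 with hv
  set f : ℝ := (F.card : ℝ)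
  set c : ℝ := ((Nat.card H : ℕ) : ℝ) with hc
  -- card relation
  have hcard : (Fintype.card G : ℝ) = 2 * c := by
    have := Subgroup.card_mul_index H
    rw [hH, Nat.card_eq_fintype_card (α := G)] at this
    rw [← this]; push_cast; ring
  -- A.mulVec v = d • v
  have hAv : A.mulVec v = d • v := by
    funext g
    by_cases hg : g ∈ H
    · have : ∀ h : G, A g h * v h = A g h * 1 := by
        intro h
        by_cases hh : h ∈ H
        · simp [hv, hh]
        · have : A g h = 0 := by
            apply hzero
            intro hmem
            exact hh (by simpa using H.mul_mem (hCH hmem) hg)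
          simp [this]
      have h1 : A.mulVec v g = A.mulVec (fun _ => 1) g := by
        simp only [Matrix.mulVec, dotProduct]
        exact Finset.sum_congr rfl fun h _ => this h
      rw [h1, hrow]
      simp [hv, hg]
    · have : ∀ h : G, A g h * v h = 0 := by
        intro h
        by_cases hh : h ∈ H
        · have : A g h = 0 := by
            apply hzero
            intro hmem
            have := hCH hmem
            exact hg (by
              have : g = (h * g⁻¹)⁻¹ * h := by group
              rw [this]
              exact H.mul_mem (H.inv_mem (hCH hmem)) hh)
          simp [this]
        · simp [hv, hh]
      simp only [Matrix.mulVec, dotProduct]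
      rw [Finset.sum_eq_zero fun h _ => this h]
      simp [hv, hg]
  have huv : u ⬝ᵥ v = f := by
    have : ∀ g : G, u g * v g = u g := by
      intro g
      by_cases hg : g ∈ F
      · have : g ∈ H := hFH hg
        simp [hu, hv, hg, this]
      · simp [hu, hg]
    simp only [dotProduct]
    rw [Finset.sum_congr rfl fun g _ => this g]
    simp [hu, f]
  have hvv : v ⬝ᵥ v = c := by
    have : ∀ g : G, v g * v g = v g := by
      intro g; by_cases hg : g ∈ H <;> simp [hv, hg]
    simp only [dotProduct]
    rw [Finset.sum_congr rfl fun g _ => this g]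
    simp only [hv, Finset.sum_ite_eq, Finset.sum_boole]
    rw [hc, Nat.card_eq_fintype_card, Fintype.card_subtype]
  have huAu : u ⬝ᵥ A.mulVec u = 0 := by
    simp only [dotProduct, Matrix.mulVec]
    apply Finset.sum_eq_zero
    intro g _
    rw [Finset.mul_sum]
    apply Finset.sum_eq_zero
    intro h _
    by_cases hg : g ∈ F
    · by_cases hh : h ∈ F
      · rw [hzero g h (hF g hg h hh)]; ring
      · simp [hu, hh]
    · simp [hu, hg]
  have huAv : u ⬝ᵥ A.mulVec v = d * f := by
    rw [hAv, dotProduct_smul, huv]; simp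
  have hvAu : v ⬝ᵥ A.mulVec u = d * f := by
    rw [Matrix.dotProduct_mulVec, ← Matrix.mulVec_transpose, hsymm.eq, ← huAv, hAv]
    rw [dotProduct_comm]
  have hvAv : v ⬝ᵥ A.mulVec v = d * c := by
    rw [hAv, dotProduct_smul, hvv]; simp
  -- Rayleigh on y = c • u - f • v
  set y : G → ℝ := c • u - f • v with hy
  have hray := rayleigh_min A hsymm τ hτ_least y
  have hyAy : y ⬝ᵥ A.mulVec y = -(c * d * f * f) := by
    rw [hy]
    simp only [Matrix.mulVec_sub, Matrix.mulVec_smul, dotProduct_sub, sub_dotProduct,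
      smul_dotProduct, dotProduct_smul, smul_eq_mul]
    rw [huAu, huAv, hvAu, hvAv]
    ring
  have hyy : y ⬝ᵥ y = c * c * f - c * f * f := by
    rw [hy]
    simp only [dotProduct_sub, sub_dotProduct, smul_dotProduct, dotProduct_smul, smul_eq_mul]
    have huu : u ⬝ᵥ u = f := by
      have : ∀ g : G, u g * u g = u g := by
        intro g; by_cases hg : g ∈ F <;> simp [hu, hg]
      simp only [dotProduct]
      rw [Finset.sum_congr rfl fun g _ => this g]
      simp [hu, f]
    have hvu : v ⬝ᵥ u = f := by rw [dotProduct_comm, huv]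
    rw [huu, huv, hvu, hvv]
    ring
  rw [hyAy, hyy] at hray
  rw [hcard]
  have hc0 : 0 ≤ c := by positivity
  have hf0 : 0 ≤ f := by positivity
  rcases eq_or_lt_of_le hf0 with hf | hf
  · rw [← hf]; nlinarith
  · have hcpos : 0 < c := by
      by_contra hcle
      push_neg at hcle
      have : c = 0 := le_antisymm hcle hc0
      -- F nonempty, F ⊆ H, so card H > 0
      have : (0:ℝ) < c := by
        have : 0 < Nat.card H := Nat.card_pos
        rw [hc]; exact_mod_cast this
      linarith
    have : 2 * c / 2 = c := by ring
    rw [this]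
    nlinarith [mul_pos hcpos hf]
end
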